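/- The sum over k ≥ 2 of k·⌈log₂ k⌉/(k!·e) converges and is less than 1 (in fact at most 0.9154). -/

import Mathlib

open Finset

private lemma clog_le_self' (k : ℕ) : Nat.clog 2 k ≤ k :=
  (Nat.clog_le_iff_le_pow one_lt_two).2 (Nat.lt_two_pow_self (n := k)).le

private lemma sq_le_pow' (n : ℕ) : (n + 13) ^ 2 ≤ 2 ^ (n + 13) := by
  induction n with
  | zero => norm_num
  | succ n ih =>
    have h1 : (n + 1 + 13) ^ 2 ≤ 2 * (n + 13) ^ 2 := by nlinarith [sq_nonneg n, n.zero_le]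
    calc (n + 1 + 13) ^ 2 ≤ 2 * (n + 13) ^ 2 := h1
      _ ≤ 2 * 2 ^ (n + 13) := by omega
      _ = 2 ^ (n + 1 + 13) := by ring

private lemma fact_ge' (n : ℕ) : 6227020800 * 14 ^ n ≤ (n + 13).factorial := by
  induction n with
  | zero => norm_num [Nat.factorial]
  | succ n ih =>
    have h : (n + 1 + 13).factorial = (n + 14) * (n + 13).factorial := rfl
    rw [h]
    calc 6227020800 * 14 ^ (n + 1) = 14 * (6227020800 * 14 ^ n) := by ring
      _ ≤ 14 * (n + 13).factorial := by omega
      _ ≤ (n + 14) * (n + 13).factorial := Nat.mul_le_mul_right _ (by omega)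

private lemma key_nat' (n : ℕ) :
    (n + 13) * Nat.clog 2 (n + 13) * (6227020800 * 7 ^ n) ≤ 8192 * (n + 13).factorial := by
  have h14 : (14 : ℕ) ^ n = 2 ^ n * 7 ^ n := by
    rw [show (14:ℕ) = 2 * 7 by norm_num, mul_pow]
  calc (n + 13) * Nat.clog 2 (n + 13) * (6227020800 * 7 ^ n)
      ≤ (n + 13) * (n + 13) * (6227020800 * 7 ^ n) :=
        Nat.mul_le_mul_right _ (Nat.mul_le_mul_left _ (clog_le_self' _))
    _ ≤ 2 ^ (n + 13) * (6227020800 * 7 ^ n) := by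
        have := sq_le_pow' n
        rw [pow_two] at this
        exact Nat.mul_le_mul_right _ this
    _ = 8192 * (6227020800 * 14 ^ n) := by rw [pow_add, h14]; ring
    _ ≤ 8192 * (n + 13).factorial := Nat.mul_le_mul_left _ (fact_ge' n)

private lemma mul_clog_le_four_pow (k : ℕ) : k * Nat.clog 2 k ≤ 4 ^ k := by
  have h1 : k ≤ 2 ^ k := (Nat.lt_two_pow_self (n := k)).le
  have h2 : Nat.clog 2 k ≤ 2 ^ k := (clog_le_self' k).trans h1
  calc k * Nat.clog 2 k ≤ 2 ^ k * 2 ^ k := Nat.mul_le_mul h1 h2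
    _ = 4 ^ k := by rw [← pow_add, show (4:ℕ) = 2^2 by norm_num, ← pow_mul]; ring_nf

/-- The sum over k ≥ 2 of k·⌈log₂ k⌉/(k!·e) converges, is at most 0.9154,
and in particular is less than 1. -/
theorem stmt0 :
    Summable (fun k : ℕ =>
      if 2 ≤ k then ((k * Nat.clog 2 k : ℕ) : ℝ) / (Nat.factorial k * Real.exp 1) else 0) ∧
    (∑' k : ℕ,
      if 2 ≤ k then ((k * Nat.clog 2 k : ℕ) : ℝ) / (Nat.factorial k * Real.exp 1) else 0)
        ≤ 0.9154 ∧
    (∑' k : ℕ,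
      if 2 ≤ k then ((k * Nat.clog 2 k : ℕ) : ℝ) / (Nat.factorial k * Real.exp 1) else 0)
        < 1 := by
  set f : ℕ → ℝ := fun k =>
    if 2 ≤ k then ((k * Nat.clog 2 k : ℕ) : ℝ) / (Nat.factorial k * Real.exp 1) else 0 with hf
  have he9 : (2.7182818283 : ℝ) < Real.exp 1 := Real.exp_one_gt_d9
  have he1 : (1:ℝ) ≤ Real.exp 1 := by linarith
  have hepos : (0:ℝ) < Real.exp 1 := by linarith
  have hnn : ∀ k, 0 ≤ f k := by
    intro k
    simp only [hf]
    split
    · positivity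
    · exact le_rfl
  have hle : ∀ k, f k ≤ (4:ℝ) ^ k / k.factorial := by
    intro k
    simp only [hf]
    split
    · have hfac : (0:ℝ) < (k.factorial : ℝ) := by positivity
      have h4 : ((k * Nat.clog 2 k : ℕ) : ℝ) ≤ 4 ^ k := by
        calc ((k * Nat.clog 2 k : ℕ) : ℝ) ≤ ((4 ^ k : ℕ) : ℝ) := by
              exact_mod_cast mul_clog_le_four_pow k
          _ = 4 ^ k := by push_cast; ring
      calc ((k * Nat.clog 2 k : ℕ) : ℝ) / (k.factorial * Real.exp 1)
          ≤ ((k * Nat.clog 2 k : ℕ) : ℝ) / k.factorial := by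
            apply div_le_div_of_nonneg_left (by positivity) hfac
            exact le_mul_of_one_le_right hfac.le he1
        _ ≤ 4 ^ k / k.factorial := by gcongr
    · positivity
  have hsum : Summable f :=
    Summable.of_nonneg_of_le hnn hle (Real.summable_pow_div_factorial 4)
  have hb : tsum f ≤ 0.9154 := by
    have hsplit := Summable.sum_add_tsum_nat_add 13 hsum
    -- finite part
    have hA : ∑ i ∈ range 13, f i = (3103789 / 1247400) / Real.exp 1 := by
      simp only [hf]
      rw [Finset.sum_range_succ, Finset.sum_range_succ, Finset.sum_range_succ,
        Finset.sum_range_succ, Finset.sum_range_succ, Finset.sum_range_succ,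
        Finset.sum_range_succ, Finset.sum_range_succ, Finset.sum_range_succ,
        Finset.sum_range_succ, Finset.sum_range_succ, Finset.sum_range_succ,
        Finset.sum_range_one]
      norm_num [Nat.clog, Nat.factorial]
      field_simp
      ring
    -- tail part
    have htailterm : ∀ n : ℕ, f (n + 13) ≤ (8192 / 6227020800 : ℝ) * (1/7) ^ n := by
      intro n
      simp only [hf]
      rw [if_pos (by omega)]
      have hfac : (0:ℝ) < ((n+13).factorial : ℝ) := by positivity
      have step1 : ((( n + 13) * Nat.clog 2 (n + 13) : ℕ) : ℝ) / ((n+13).factorial * Real.exp 1)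
          ≤ (((n + 13) * Nat.clog 2 (n + 13) : ℕ) : ℝ) / (n+13).factorial := by
        apply div_le_div_of_nonneg_left (by positivity) hfac
        exact le_mul_of_one_le_right hfac.le he1
      refine step1.trans ?_
      have h7 : (0:ℝ) < (6227020800 : ℝ) * 7 ^ n := by positivity
      have key : (((n + 13) * Nat.clog 2 (n + 13) : ℕ) : ℝ) * (6227020800 * 7 ^ n)
          ≤ 8192 * ((n + 13).factorial : ℝ) := by exact_mod_cast key_nat' n
      rw [div_le_iff₀ hfac]
      have hexp : ((8192:ℝ) / 6227020800) * (1/7) ^ n * ((n + 13).factorial : ℝ)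
          = (8192 * ((n + 13).factorial : ℝ)) / (6227020800 * 7 ^ n) := by
        rw [div_pow, one_pow]; field_simp
      rw [hexp, le_div_iff₀ h7]
      exact key
    have htail_nn : ∀ n : ℕ, 0 ≤ f (n + 13) := fun n => hnn _
    have hgeo : Summable (fun n : ℕ => (8192 / 6227020800 : ℝ) * (1/7) ^ n) :=
      (summable_geometric_of_lt_one (by norm_num) (by norm_num)).mul_left _
    have htail : (∑' n : ℕ, f (n + 13)) ≤ (8192 / 6227020800 : ℝ) * (7/6) := by
      have h1 : (∑' n : ℕ, f (n + 13)) ≤ ∑' n : ℕ, (8192 / 6227020800 : ℝ) * (1/7) ^ n :=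
        Summable.tsum_le_tsum htailterm ((summable_nat_add_iff 13).2 hsum) hgeo
      refine h1.trans ?_
      rw [tsum_mul_left, tsum_geometric_of_lt_one (by norm_num) (by norm_num)]
      norm_num
    have hApos : (0:ℝ) ≤ (3103789 / 1247400 : ℝ) := by norm_num
    have hAle : (3103789 / 1247400 : ℝ) / Real.exp 1 ≤ (3103789 / 1247400 : ℝ) / 2.7182818283 := by
      apply div_le_div_of_nonneg_left hApos (by norm_num) he9.le
    have : tsum f = ∑ i ∈ range 13, f i + ∑' n : ℕ, f (n + 13) := hsplit.symm
    rw [this, hA]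
    calc (3103789 / 1247400 : ℝ) / Real.exp 1 + ∑' n : ℕ, f (n + 13)
        ≤ (3103789 / 1247400 : ℝ) / 2.7182818283 + (8192 / 6227020800 : ℝ) * (7/6) := by
          exact add_le_add hAle htail
      _ ≤ 0.9154 := by norm_num
  exact ⟨hsum, hb, hb.trans_lt (by norm_num)⟩
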